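/- arXiv:1612.07638 — 2 statements merged into one kernel-verified Lean document; each statement's English description precedes it below -/
import Mathlib

section
/- Let (R,m) be a Noetherian local ring, let a, b be ideals, and let p_1,...,p_n be prime ideals such that ab ⊄ p_j for all j ≤ n. Let x ∈ ab with x ∉ p_j for all j ≤ n. Then there exist elements a_1,...,a_r ∈ a and b_1,...,b_r ∈ b such that x = a_1b_1 + ⋯ + a_rb_r, and moreover a_ib_i ∉ p_j and a_1b_1 + ⋯ + a_ib_i ∉ p_j for all i ≤ r and all j ≤ n. -/
open Submodule IsLocalRing Classical CategoryTheory

section Defs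

variable (R : Type) [CommRing R]

/-- Krull dimension of a module: `dim (R / Ann M)`. -/
noncomputable def moduleDim (M : Type) [AddCommGroup M] [Module R M] : WithBot ℕ∞ :=
  ringKrullDim (R ⧸ Module.annihilator R M)

/-- Length of a module, as the Krull dimension of its lattice of submodules
(read as `0` if the module is zero or not of finite length). -/
noncomputable def flen (M : Type) [AddCommGroup M] [Module R M] : ℕ :=
  ((Order.krullDim (Submodule R M)).unbotD 0).toNat

/-- Krull dimension of a module, as a natural number. -/
noncomputable def dimnat (N : Type) [AddCommGroup N] [Module R N] : ℕ :=
  ((moduleDim R N).unbotD 0).toNat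

variable {R}

/-- A system of parameters of `M`: `d` elements of the maximal ideal such that the quotient
of `M` by the submodule they generate has dimension `≤ 0` (i.e. finite length). -/
def IsSOP [IsLocalRing R] {d : ℕ} (M : Type) [AddCommGroup M] [Module R M]
    (x : Fin d → R) : Prop :=
  (∀ i, x i ∈ maximalIdeal R) ∧
    moduleDim R (M ⧸ (Ideal.span (Set.range x) • ⊤ : Submodule R M)) ≤ 0

variable (R)

/-- The ideal `b(M)`: the intersection, over all systems of parameters `x₁, …, x_d` of `M`
and all `i ≤ d`, of the annihilators of `((x₁,…,x_{i-1})M : x_i)/(x₁,…,x_{i-1})M`. -/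
noncomputable def bIdeal [IsLocalRing R] (M : Type) [AddCommGroup M] [Module R M]
    (d : ℕ) : Ideal R :=
  ⨅ (x : Fin d → R) (_ : IsSOP M x) (i : Fin d),
    Module.annihilator R
      ↥(LinearMap.ker (LinearMap.lsmul R
        (M ⧸ (Ideal.span (x '' {j | j < i}) • ⊤ : Submodule R M)) (x i)))

variable {R}

/-- A parameter element of the `d`-dimensional module `M`:
an element of the maximal ideal with `dim M/xM = d - 1`. -/
def IsParamElt [IsLocalRing R] (d : ℕ) (M : Type) [AddCommGroup M] [Module R M]
    (x : R) : Prop :=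
  x ∈ maximalIdeal R ∧
    moduleDim R (M ⧸ (Ideal.span {x} • ⊤ : Submodule R M)) = ((d - 1 : ℕ) : WithBot ℕ∞)

/-- `U` is the unmixed component `U_M(0)` of the `d`-dimensional module `M`:
the largest submodule of dimension `< d`. -/
def IsUnmixedComponent (d : ℕ) {M : Type} [AddCommGroup M] [Module R M]
    (U : Submodule R M) : Prop :=
  moduleDim R ↥U < (d : WithBot ℕ∞) ∧
    ∀ N : Submodule R M, moduleDim R ↥N < (d : WithBot ℕ∞) → N ≤ U

/-- The depth of a module over a local ring: the supremum of lengths of regular sequences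
contained in the maximal ideal. -/
noncomputable def moduleDepth (S : Type) [CommRing S] [IsLocalRing S]
    (N : Type) [AddCommGroup N] [Module S N] : ℕ∞ :=
  ⨆ (rs : List S) (_ : ∀ r ∈ rs, r ∈ maximalIdeal S)
    (_ : RingTheory.Sequence.IsRegular N rs), (rs.length : ℕ∞)

/-- A witness that `R` is a homomorphic image of a Cohen–Macaulay Noetherian local ring. -/
structure CMQuotientWitness (R : Type) [CommRing R] where
  S : Type
  [commRing : CommRing S]
  [localRing : IsLocalRing S]
  noetherian : IsNoetherianRing S
  depth_eq_dim : (moduleDepth S S : WithBot ℕ∞) = moduleDim S S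
  f : S →+* R
  surjective : Function.Surjective f

variable (R)

/-- The Hilbert–Samuel multiplicity `e₀(I, M)` of a `d`-dimensional module `M`, characterized by
`ℓ(M/I^{n+1}M) · d! / n^d → e₀(I, M)`. -/
noncomputable def mult (I : Ideal R) (M : Type) [AddCommGroup M] [Module R M]
    (d : ℕ) : ℕ :=
  if h : ∃ e : ℕ, Filter.Tendsto
      (fun n : ℕ =>
        (flen R (M ⧸ ((I ^ (n + 1)) • ⊤ : Submodule R M)) : ℝ) * (Nat.factorial d) / ((n : ℝ) ^ d))
      Filter.atTop (nhds (e : ℝ))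
  then h.choose else 0

/-- `x` is a superficial element of `M` with respect to `I`. -/
def IsSuperficial [IsLocalRing R] (I : Ideal R) (M : Type) [AddCommGroup M] [Module R M]
    (x : R) : Prop :=
  x ∈ I ∧ x ∉ maximalIdeal R * I ∧ ∃ c : ℕ, ∀ n ≥ c,
    (Submodule.comap (LinearMap.lsmul R M x) ((I ^ (n + 1)) • ⊤) ⊓ ((I ^ c) • ⊤)
      : Submodule R M) = (I ^ n) • ⊤

/-- `ℓ_{R_p}(H⁰_{pR_p}(M_p))`: the length over `R_p` of the `pR_p`-torsion of `M_p`. -/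
noncomputable def locLenH0 (p : Ideal R) (M : Type) [AddCommGroup M] [Module R M] : ℕ :=
  if hp : p.IsPrime then
    letI := hp
    flen (Localization.AtPrime p)
      ↥(⨆ k : ℕ, Submodule.torsionBySet (Localization.AtPrime p)
          (LocalizedModule p.primeCompl M)
          ((Ideal.map (algebraMap R (Localization.AtPrime p)) p ^ k : Ideal _) : Set _))
  else 0

/-- `ℓ_{R_p}(M_p)`: the length of the localization of `M` at `p` over `R_p`. -/
noncomputable def locLen (p : Ideal R) (M : Type) [AddCommGroup M] [Module R M] : ℕ :=
  if hp : p.IsPrime then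
    letI := hp
    flen (Localization.AtPrime p) (LocalizedModule p.primeCompl M)
  else 0

/-- The arithmetic degree `adeg(I, M) = Σ_{p ∈ Ass M} ℓ_{R_p}(H⁰_{pR_p}(M_p)) · e₀(I, R/p)`. -/
noncomputable def adeg (I : Ideal R) (M : Type) [AddCommGroup M] [Module R M] : ℕ :=
  ∑ᶠ p ∈ associatedPrimes R M, locLenH0 R p M * mult R I (R ⧸ p) (dimnat R (R ⧸ p))

variable {R}

/-- An `I`-filter regular sequence on `M`. -/
def IsFilterRegularSeq (I : Ideal R) (M : Type) [AddCommGroup M] [Module R M]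
    {t : ℕ} (x : Fin t → R) : Prop :=
  (∀ i, x i ∈ I) ∧ ∀ i : Fin t,
    Module.support R ↥(LinearMap.ker (LinearMap.lsmul R
      (M ⧸ (Ideal.span (x '' {j | j < i}) • ⊤ : Submodule R M)) (x i)))
      ⊆ PrimeSpectrum.zeroLocus (I : Set R)

end Defs



section Stmt5Aux

variable {R : Type} [CommRing R]

lemma avoid2 (a : Ideal R) (F : Finset (R × R)) :
    ∀ (s : Finset (Ideal R)),
    (∀ q ∈ s, q.IsPrime ∧ ¬ a ≤ q ∧ Infinite (R ⧸ q)) →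
    (∀ q ∈ s, ∀ z ∈ F, z.1 ∉ q ∨ z.2 ∉ q) →
    ∃ α ∈ a, ∀ q ∈ s, ∀ z ∈ F, z.1 * α - z.2 ∉ q := by
  classical
  intro s
  induction s using Finset.strongInduction with
  | _ s ih =>
    intro hs hF
    rcases s.eq_empty_or_nonempty with rfl | hne
    · exact ⟨0, a.zero_mem, by simp⟩
    obtain ⟨q₀, hq₀s, hq₀min⟩ := s.exists_minimal hne
    obtain ⟨hq₀p, hq₀a, hq₀inf⟩ := hs q₀ hq₀s
    haveI := hq₀p; haveI := hq₀inf
    set s' := s.erase q₀ with hs'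
    obtain ⟨α', hα'a, hα'⟩ := ih s' (Finset.erase_ssubset hq₀s)
      (fun q hq => hs q (Finset.mem_of_mem_erase hq))
      (fun q hq => hF q (Finset.mem_of_mem_erase hq))
    obtain ⟨a₀, ha₀a, ha₀q₀⟩ := SetLike.not_le_iff_exists.mp hq₀a
    have hex : ∀ q ∈ s', ∃ e, e ∈ q ∧ e ∉ q₀ := by
      intro q hq
      have hne' : q ≠ q₀ := Finset.ne_of_mem_erase hq
      have hqs : q ∈ s := Finset.mem_of_mem_erase hq
      have hnlt : ¬ q < q₀ := fun hlt => lt_irrefl _ (lt_of_lt_of_le hlt (hq₀min hqs hlt.le))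
      have : ¬ q ≤ q₀ := fun hle => hnlt (lt_of_le_of_ne hle hne')
      exact SetLike.not_le_iff_exists.mp this
    choose e he1 he2 using hex
    set d₀ : R := ∏ q ∈ s'.attach, e q.1 q.2 with hd₀
    set d : R := a₀ * d₀ with hd
    have hda : d ∈ a := Ideal.mul_mem_right _ _ ha₀a
    have hdq : ∀ q ∈ s', d ∈ q := by
      intro q hq
      have : e q hq ∣ d₀ := Finset.dvd_prod_of_mem _ (s'.mem_attach ⟨q, hq⟩)
      obtain ⟨c, hc⟩ := this
      have : d₀ ∈ q := hc ▸ Ideal.mul_mem_right _ _ (he1 q hq)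
      exact Ideal.mul_mem_left _ _ this
    have hdq₀ : d ∉ q₀ := by
      intro hmem
      rcases hq₀p.mem_or_mem hmem with h | h
      · exact ha₀q₀ h
      · have : d₀ ∉ q₀ := by
          refine Finset.prod_induction _ (fun x => x ∉ q₀) ?_ ?_ ?_
          · intro u v hu hv huv
            rcases hq₀p.mem_or_mem huv with h' | h' <;> [exact hu h'; exact hv h']
          · intro h1
            exact hq₀p.ne_top ((Ideal.eq_top_iff_one _).mpr h1)
          · intro q hq
            exact he2 q.1 q.2
        exact this h
    -- work in quotient
    set φ := Ideal.Quotient.mk q₀ with hφ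
    have hdne : φ d ≠ 0 := fun h => hdq₀ (Ideal.Quotient.eq_zero_iff_mem.mp h)
    have hFq₀ := hF q₀ hq₀s
    set Bad : Set (R ⧸ q₀) := ⋃ z ∈ (F : Set (R × R)), {x | φ z.1 * (φ α' + x * φ d) = φ z.2}
      with hBad
    have hBadFin : Bad.Finite := by
      refine Set.Finite.biUnion F.finite_toSet (fun z hz => ?_)
      have hz' := hFq₀ z hz
      refine Set.Subsingleton.finite ?_
      intro x hx y hy
      simp only [Set.mem_setOf_eq] at hx hy
      by_cases h1 : φ z.1 = 0
      · exfalso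
        rcases hz' with h | h
        · exact h (Ideal.Quotient.eq_zero_iff_mem.mp h1)
        · have h0 : φ z.2 = 0 := by rw [← hx, h1, zero_mul]
          exact h (Ideal.Quotient.eq_zero_iff_mem.mp h0)
      · have h2 : φ α' + x * φ d = φ α' + y * φ d :=
          mul_left_cancel₀ h1 (hx.trans hy.symm)
        have h3 : x * φ d = y * φ d := by
          have := add_left_cancel h2
          exact this
        exact mul_right_cancel₀ hdne h3
    obtain ⟨xq, hxq⟩ := hBadFin.infinite_compl.nonempty
    obtain ⟨t, rfl⟩ := Ideal.Quotient.mk_surjective xq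
    refine ⟨α' + t * d, a.add_mem hα'a (Ideal.mul_mem_left _ _ hda), ?_⟩
    intro q hq z hz hmem
    by_cases hqq : q = q₀
    · subst hqq
      apply hxq
      rw [hBad]
      refine Set.mem_biUnion hz ?_
      have : φ (z.1 * (α' + t * d) - z.2) = 0 := Ideal.Quotient.eq_zero_iff_mem.mpr hmem
      rw [map_sub, sub_eq_zero, map_mul, map_add, map_mul] at this
      exact this
    · have hq' : q ∈ s' := Finset.mem_erase.mpr ⟨hqq, hq⟩
      have h1 : z.1 * (t * d) ∈ q := Ideal.mul_mem_left _ _ (Ideal.mul_mem_left _ _ (hdq q hq'))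
      have h2 : z.1 * α' - z.2 ∈ q := by
        have : z.1 * α' - z.2 = (z.1 * (α' + t * d) - z.2) - z.1 * (t * d) := by ring
        rw [this]
        exact Ideal.sub_mem _ hmem h1
      exact hα' q hq' z hz h2

lemma one_not_mem_of_prime {q : Ideal R} (hq : q.IsPrime) : (1:R) ∉ q :=
  fun h => hq.ne_top ((Ideal.eq_top_iff_one _).mpr h)

lemma decomp (a b : Ideal R) (s : Finset (Ideal R))
    (hsa : ∀ q ∈ s, q.IsPrime ∧ ¬ a ≤ q ∧ Infinite (R ⧸ q))
    (hsb : ∀ q ∈ s, ¬ b ≤ q)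
    {x : R} (hx : x ∈ a * b) :
    ∃ L : List (R × R),
      (∀ z ∈ L, z.1 ∈ a ∧ z.2 ∈ b ∧ ∀ q ∈ s, z.1 ∉ q ∧ z.2 ∉ q) ∧
      (L.map fun z => z.1 * z.2).sum = x := by
  classical
  refine Submodule.mul_induction_on hx ?_ ?_
  · intro m hm t ht
    obtain ⟨α, hαa, hα⟩ := avoid2 a {((1:R),(0:R)), (1, -m)} s hsa
      (fun q hq z hz => Or.inl (by
        rcases Finset.mem_insert.mp hz with h | h
        · rw [h]; exact one_not_mem_of_prime (hsa q hq).1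
        · rw [Finset.mem_singleton.mp h]; exact one_not_mem_of_prime (hsa q hq).1))
    obtain ⟨β, hβb, hβ⟩ := avoid2 b {((1:R),(0:R)), (1, -t)} s
      (fun q hq => ⟨(hsa q hq).1, hsb q hq, (hsa q hq).2.2⟩)
      (fun q hq z hz => Or.inl (by
        rcases Finset.mem_insert.mp hz with h | h
        · rw [h]; exact one_not_mem_of_prime (hsa q hq).1
        · rw [Finset.mem_singleton.mp h]; exact one_not_mem_of_prime (hsa q hq).1))
    have hα0 : ∀ q ∈ s, α ∉ q := by
      intro q hq
      have := hα q hq ((1:R),(0:R)) (by simp)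
      simpa using this
    have hαm : ∀ q ∈ s, m + α ∉ q := by
      intro q hq
      have := hα q hq ((1:R), -m) (by simp)
      simpa [add_comm, sub_neg_eq_add] using this
    have hβ0 : ∀ q ∈ s, β ∉ q := by
      intro q hq
      have := hβ q hq ((1:R),(0:R)) (by simp)
      simpa using this
    have hβt : ∀ q ∈ s, t + β ∉ q := by
      intro q hq
      have := hβ q hq ((1:R), -t) (by simp)
      simpa [add_comm, sub_neg_eq_add] using this
    refine ⟨[(m+α, t+β), (α, -(t+β)), (-(m+α), β), (α, β)], ?_, ?_⟩
    · intro z hz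
      simp only [List.mem_cons, List.not_mem_nil, or_false] at hz
      rcases hz with rfl | rfl | rfl | rfl
      · exact ⟨a.add_mem hm hαa, b.add_mem ht hβb, fun q hq => ⟨hαm q hq, hβt q hq⟩⟩
      · exact ⟨hαa, b.neg_mem (b.add_mem ht hβb), fun q hq =>
          ⟨hα0 q hq, fun h => hβt q hq (by simpa using q.neg_mem h)⟩⟩
      · exact ⟨a.neg_mem (a.add_mem hm hαa), hβb, fun q hq =>
          ⟨fun h => hαm q hq (by simpa using q.neg_mem h), hβ0 q hq⟩⟩
      · exact ⟨hαa, hβb, fun q hq => ⟨hα0 q hq, hβ0 q hq⟩⟩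
    · simp only [List.map_cons, List.map_nil, List.sum_cons, List.sum_nil]
      ring
  · rintro y z ⟨Ly, hLy, hys⟩ ⟨Lz, hLz, hzs⟩
    refine ⟨Ly ++ Lz, ?_, ?_⟩
    · intro w hw
      rcases List.mem_append.mp hw with h | h
      · exact hLy w h
      · exact hLz w h
    · rw [List.map_append, List.sum_append, hys, hzs]

lemma fixup (a b : Ideal R) (s : Finset (Ideal R))
    (hsa : ∀ q ∈ s, q.IsPrime ∧ ¬ a ≤ q ∧ Infinite (R ⧸ q))
    (hsb : ∀ q ∈ s, ¬ b ≤ q) :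
    ∀ L : List (R × R),
      (∀ z ∈ L, z.1 ∈ a ∧ z.2 ∈ b ∧ ∀ q ∈ s, z.1 ∉ q ∧ z.2 ∉ q) →
      ∃ L' : List (R × R),
        (∀ z ∈ L', z.1 ∈ a ∧ z.2 ∈ b ∧ ∀ q ∈ s, z.1 ∉ q ∧ z.2 ∉ q) ∧
        (L'.map fun z => z.1 * z.2).sum = (L.map fun z => z.1 * z.2).sum ∧
        ∀ i : ℕ, 0 < i → i < L'.length → ∀ q ∈ s,
          ((L'.take i).map fun z => z.1 * z.2).sum ∉ q := by
  classical
  intro L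
  induction L using List.reverseRecOn with
  | nil => exact fun _ => ⟨[], by simp, by simp, by simp⟩
  | append_singleton M g ih =>
    intro hgood
    obtain ⟨H, hH, hHsum, hHpart⟩ := ih (fun z hz => hgood z (List.mem_append_left _ hz))
    obtain ⟨hA, hB, hABq⟩ := hgood g (List.mem_append_right _ (List.mem_singleton_self g))
    obtain ⟨A, B⟩ := g
    simp only at hA hB hABq
    have hsb' : ∀ q ∈ s, q.IsPrime ∧ ¬ b ≤ q ∧ Infinite (R ⧸ q) :=
      fun q hq => ⟨(hsa q hq).1, hsb q hq, (hsa q hq).2.2⟩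
    set y : R := (M.map fun z => z.1 * z.2).sum with hy
    set S₀ : R := ((H.dropLast).map fun z => z.1 * z.2).sum with hS₀
    obtain ⟨δ, hδb, hδ⟩ := avoid2 b
      {((1:R),(0:R)), (1, B), (A, S₀ + A*B), (A, A*B + y)} s hsb'
      (by
        intro q hq z hz
        refine Or.inl ?_
        simp only [Finset.mem_insert, Finset.mem_singleton] at hz
        rcases hz with rfl | rfl | rfl | rfl
        · exact one_not_mem_of_prime (hsa q hq).1
        · exact one_not_mem_of_prime (hsa q hq).1
        · exact (hABq q hq).1
        · exact (hABq q hq).1)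
    have c1 : ∀ q ∈ s, δ ∉ q := by
      intro q hq; have := hδ q hq ((1:R),(0:R)) (by simp); simpa using this
    have c2 : ∀ q ∈ s, B - δ ∉ q := by
      intro q hq
      have h := hδ q hq ((1:R), B) (by simp)
      simp only [one_mul] at h
      intro hc; exact h (by simpa using q.neg_mem hc)
    have c3 : ∀ q ∈ s, A * δ - (S₀ + A*B) ∉ q := by
      intro q hq; exact hδ q hq (A, S₀ + A*B) (by simp)
    have c4 : ∀ q ∈ s, A * δ - (A*B + y) ∉ q := by
      intro q hq; exact hδ q hq (A, A*B + y) (by simp)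
    have hgood' : ∀ z ∈ [(A, B - δ), (A, δ)], z.1 ∈ a ∧ z.2 ∈ b ∧
        ∀ q ∈ s, z.1 ∉ q ∧ z.2 ∉ q := by
      intro z hz
      simp only [List.mem_cons, List.not_mem_nil, or_false] at hz
      rcases hz with rfl | rfl
      · exact ⟨hA, b.sub_mem hB hδb, fun q hq => ⟨(hABq q hq).1, c2 q hq⟩⟩
      · exact ⟨hA, hδb, fun q hq => ⟨(hABq q hq).1, c1 q hq⟩⟩
    rcases List.eq_nil_or_concat' H with rfl | ⟨H₀, w, rfl⟩
    · -- H empty : y = 0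
      have hy0 : y = 0 := by simpa using hHsum.symm
      refine ⟨[(A, B - δ), (A, δ)], hgood', ?_, ?_⟩
      · simp only [List.map_cons, List.map_nil, List.sum_cons, List.sum_nil,
          List.map_append, List.sum_append]
        rw [← hy, hy0]; ring
      · intro i hi0 hilen q hq
        simp only [List.length_cons, List.length_nil] at hilen
        have : i = 1 := by omega
        subst this
        simp only [List.take, List.map_cons, List.map_nil, List.sum_cons, List.sum_nil]
        intro hc
        apply c4 q hq
        have he : A * δ - (A*B + y) = -(A*(B-δ) + 0) := by rw [hy0]; ring
        rw [he]
        exact q.neg_mem hc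
    · -- H = H₀ ++ [w]
      have hS₀' : S₀ = (H₀.map fun z => z.1 * z.2).sum := by
        rw [hS₀, List.dropLast_concat]
      have hHsum' : S₀ + w.1 * w.2 = y := by
        rw [hS₀']
        simpa [List.map_append, List.sum_append] using hHsum
      refine ⟨H₀ ++ [(A, B - δ), w, (A, δ)], ?_, ?_, ?_⟩
      · intro z' hz'
        rcases List.mem_append.mp hz' with h | h
        · exact hH z' (List.mem_append_left _ h)
        · simp only [List.mem_cons, List.not_mem_nil, or_false] at h
          rcases h with rfl | rfl | rfl
          · exact hgood' _ (by simp)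
          · exact hH _ (List.mem_append_right _ (by simp))
          · exact hgood' _ (by simp)
      · simp only [List.map_append, List.sum_append, List.map_cons, List.map_nil,
          List.sum_cons, List.sum_nil]
        rw [← hS₀', ← hy]
        linear_combination hHsum'
      · intro i hi0 hilen q hq
        have hlen' : i < H₀.length + 3 := by
          simpa [List.length_append] using hilen
        by_cases hc1 : i ≤ H₀.length
        · have ht1 : (H₀ ++ [(A, B - δ), w, (A, δ)]).take i = H₀.take i :=
            List.take_append_of_le_length hc1
          have ht2 : (H₀ ++ [w]).take i = H₀.take i :=
            List.take_append_of_le_length hc1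
          have := hHpart i hi0 (by simp [List.length_append]; omega) q hq
          rw [ht2] at this
          rw [ht1]
          exact this
        · by_cases hc2 : i = H₀.length + 1
          · subst hc2
            have ht : (H₀ ++ [(A, B - δ), w, (A, δ)]).take (H₀.length + 1)
                = H₀ ++ [(A, B - δ)] := by
              rw [List.take_append]
              simp
            rw [ht]
            simp only [List.map_append, List.sum_append, List.map_cons, List.map_nil,
              List.sum_cons, List.sum_nil]
            intro hc
            apply c3 q hq
            have he : A * δ - (S₀ + A*B) = -((H₀.map fun z => z.1*z.2).sum + (A*(B-δ) + 0)) := by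
              rw [hS₀']; ring
            rw [he]
            exact q.neg_mem hc
          · have hc3' : i = H₀.length + 2 := by omega
            subst hc3'
            have ht : (H₀ ++ [(A, B - δ), w, (A, δ)]).take (H₀.length + 2)
                = H₀ ++ [(A, B - δ), w] := by
              rw [show H₀.length + 2 = H₀.length + 2 from rfl, List.take_append]
              simp
            rw [ht]
            simp only [List.map_append, List.sum_append, List.map_cons, List.map_nil,
              List.sum_cons, List.sum_nil]
            intro hc
            apply c4 q hq
            have he : A * δ - (A*B + y) =
                -((H₀.map fun z => z.1*z.2).sum + (A*(B-δ) + (w.1*w.2 + 0))) := by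
              rw [← hHsum', hS₀']; ring
            rw [he]
            exact q.neg_mem hc

lemma sum_filter_le_take' {M : Type} [AddCommMonoid M] {β : Type} (f : β → M) (l : List β) :
    ∀ (m : ℕ), m < l.length →
    ∑ k ∈ Finset.univ.filter (fun k : Fin l.length => (k : ℕ) ≤ m), f (l.get k)
      = ((l.take (m+1)).map f).sum := by
  have hlen : ∀ i, i < l.length → i < (l.map f).length := by simp
  intro m
  induction m with
  | zero =>
    intro h0
    have he : Finset.univ.filter (fun k : Fin l.length => (k : ℕ) ≤ 0) = {⟨0, h0⟩} := by
      ext k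
      simp [Fin.ext_iff, Nat.le_zero]
    rw [he, Finset.sum_singleton, List.map_take, List.sum_take_succ _ _ (hlen 0 h0)]
    simp [List.get_eq_getElem]
  | succ m ihm =>
    intro h1
    have hm : m < l.length := by omega
    have he : Finset.univ.filter (fun k : Fin l.length => (k : ℕ) ≤ m + 1)
        = insert ⟨m+1, h1⟩ (Finset.univ.filter (fun k : Fin l.length => (k : ℕ) ≤ m)) := by
      ext k
      simp only [Finset.mem_filter, Finset.mem_univ, true_and, Finset.mem_insert, Fin.ext_iff]
      omega
    rw [he, Finset.sum_insert (by simp), ihm hm]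
    simp only [List.map_take]
    rw [List.sum_take_succ _ _ (hlen _ h1)]
    simp [List.get_eq_getElem, add_comm]


end Stmt5Aux

/-- Prime avoidance for a product of ideals: if `x ∈ ab` avoids the primes
`p_1, …, p_n` (none of which contains `ab`), then `x = a₁b₁ + ⋯ + a_rb_r` with `a_i ∈ a`,
`b_i ∈ b`, and all products `a_ib_i` and partial sums `a₁b₁ + ⋯ + a_ib_i` avoid every `p_j`. -/
theorem stmt5 {R : Type} [CommRing R] [IsLocalRing R] [IsNoetherianRing R]
    (a b : Ideal R) (n : ℕ) (p : Fin n → Ideal R) (hp : ∀ j, (p j).IsPrime)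
    (hab : ∀ j, ¬ a * b ≤ p j) (x : R) (hx : x ∈ a * b) (hxp : ∀ j, x ∉ p j) :
    ∃ (r : ℕ) (u v : Fin r → R), (∀ i, u i ∈ a) ∧ (∀ i, v i ∈ b) ∧
      x = ∑ i, u i * v i ∧
      ∀ (i : Fin r) (j : Fin n), u i * v i ∉ p j ∧
        (∑ k ∈ Finset.univ.filter (fun k => k ≤ i), u k * v k) ∉ p j := by
  classical
  by_cases hmax : ∃ j, p j = maximalIdeal R
  · obtain ⟨j₀, hj₀⟩ := hmax
    have htop : a * b = ⊤ := by
      by_contra h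
      exact hab j₀ (hj₀ ▸ IsLocalRing.le_maximalIdeal h)
    have ha : a = ⊤ := top_unique (htop ▸ Ideal.mul_le_left)
    have hb : b = ⊤ := top_unique (htop ▸ Ideal.mul_le_right)
    refine ⟨1, ![x], ![1], fun i => by rw [ha]; trivial, fun i => by rw [hb]; trivial,
      by simp, ?_⟩
    intro i j
    have hione : ∀ k : Fin 1, k ≤ i := fun k => le_of_eq (Subsingleton.elim k i)
    constructor
    · have : i = 0 := Subsingleton.elim i 0
      subst this
      simpa using hxp j
    · rw [Finset.filter_true_of_mem (fun k _ => hione k)]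
      simpa using hxp j
  · push_neg at hmax
    set s : Finset (Ideal R) := Finset.univ.image p with hsdef
    have hps : ∀ j, p j ∈ s := fun j => Finset.mem_image_of_mem p (Finset.mem_univ j)
    have hsa : ∀ q ∈ s, q.IsPrime ∧ ¬ a ≤ q ∧ Infinite (R ⧸ q) := by
      intro q hq
      obtain ⟨j, -, rfl⟩ := Finset.mem_image.mp hq
      refine ⟨hp j, fun h => hab j (le_trans Ideal.mul_le_left h), ?_⟩
      by_contra hfin
      rw [not_infinite_iff_finite] at hfin
      haveI := hfin
      haveI := hp j
      have hfield : IsField (R ⧸ p j) := Finite.isField_of_domain _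
      have hqmax : (p j).IsMaximal := Ideal.Quotient.maximal_of_isField _ hfield
      exact hmax j (IsLocalRing.eq_maximalIdeal hqmax)
    have hsb : ∀ q ∈ s, ¬ b ≤ q := by
      intro q hq
      obtain ⟨j, -, rfl⟩ := Finset.mem_image.mp hq
      exact fun h => hab j (le_trans Ideal.mul_le_right h)
    obtain ⟨L, hLgood, hLsum⟩ := decomp a b s hsa hsb hx
    obtain ⟨L', hgood, hsum, hpart⟩ := fixup a b s hsa hsb L hLgood
    have hsum' : (L'.map fun z => z.1 * z.2).sum = x := by rw [hsum, hLsum]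
    refine ⟨L'.length, fun i => (L'.get i).1, fun i => (L'.get i).2,
      fun i => (hgood _ (L'.get_mem _)).1, fun i => (hgood _ (L'.get_mem _)).2.1,
      ?_, ?_⟩
    · have key : ∑ i, (L'.get i).1 * (L'.get i).2 = (L'.map fun z => z.1 * z.2).sum := by
        rw [← List.sum_ofFn]
        congr 1
        rw [← List.ofFn_getElem_eq_map]
        simp [List.get_eq_getElem]
      rw [key, hsum']
    · intro i j
      have hterm : (L'.get i).1 * (L'.get i).2 ∉ p j := by
        intro h
        rcases (hp j).mem_or_mem h with h' | h'
        · exact ((hgood _ (L'.get_mem _)).2.2 (p j) (hps j)).1 h'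
        · exact ((hgood _ (L'.get_mem _)).2.2 (p j) (hps j)).2 h'
      refine ⟨hterm, ?_⟩
      have hfl : ∑ k ∈ Finset.univ.filter (fun k => k ≤ i), (L'.get k).1 * (L'.get k).2
          = ((L'.take ((i : ℕ)+1)).map fun z => z.1 * z.2).sum := by
        rw [← sum_filter_le_take' (fun z : R × R => z.1 * z.2) L' (i : ℕ) i.isLt]
        rfl
      rw [hfl]
      rcases Nat.lt_or_ge ((i : ℕ) + 1) L'.length with hlt | hge
      · exact hpart ((i : ℕ)+1) (Nat.succ_pos _) hlt (p j) (hps j)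
      · have : L'.take ((i:ℕ)+1) = L' := List.take_of_length_le (by omega)
        rw [this, hsum']
        exact hxp j
end

section
/- Let (R,m) be a Noetherian local ring, M a finitely generated R-module of dimension d ≥ 2, and x a parameter element of M with x ∉ p for every p ∈ Ass(U_M(0)) \ {m}, where U_M(0) is the unmixed component of M. Then U_M(0) ∩ xM = x·U_M(0), and consequently there is a short exact sequence 0 → U_M(0)/x·U_M(0) → M/xM → M̄/xM̄ → 0 where M̄ = M/U_M(0); moreover the image of U_M(0)/x·U_M(0) in M/xM is contained in U_{M/xM}(0). -/
open Submodule IsLocalRing Classical CategoryTheory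

section AuxStmt12

open _root_.Order

variable {R : Type} [CommRing R]

variable {R : Type} [CommRing R]

lemma auxLenLe (I : Ideal R) (c : LTSeries (PrimeSpectrum R))
    (hc : I ≤ c.head.asIdeal) : (c.length : WithBot ℕ∞) ≤ ringKrullDim (R ⧸ I) := by
  have hmem : ∀ i, I ≤ (c i).asIdeal := fun i => hc.trans (c.monotone (Fin.zero_le i))
  have hker : ∀ i, RingHom.ker (Ideal.Quotient.mk I) ≤ (c i).asIdeal := by
    intro i; rw [Ideal.mk_ker]; exact hmem i
  have hcm : ∀ p : Ideal R, p.IsPrime → I ≤ p →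
      Ideal.comap (Ideal.Quotient.mk I) (Ideal.map (Ideal.Quotient.mk I) p) = p := by
    intro p hp hIp
    rw [Ideal.comap_map_of_surjective _ Ideal.Quotient.mk_surjective,
      ← RingHom.ker_eq_comap_bot, Ideal.mk_ker, sup_eq_left.mpr hIp]
  let c' : LTSeries (PrimeSpectrum (R ⧸ I)) :=
    { length := c.length
      toFun := fun i => ⟨((c i).asIdeal).map (Ideal.Quotient.mk I),
        Ideal.map_isPrime_of_surjective Ideal.Quotient.mk_surjective (hker i)⟩
      step := fun i => by
        have h1 : c.toFun i.castSucc < c.toFun i.succ := c.step i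
        refine lt_of_le_of_ne (Ideal.map_mono h1.le) (fun e => h1.ne ?_)
        apply PrimeSpectrum.ext
        have := congrArg (Ideal.comap (Ideal.Quotient.mk I)) e
        rwa [hcm _ (c i.castSucc).2 (hmem _), hcm _ (c i.succ).2 (hmem _)] at this }
  exact Order.LTSeries.length_le_krullDim c'

/-- Pull back a chain of primes in `R/J` to a chain of primes in `R` above `J`. -/
noncomputable def auxComapSeries (J : Ideal R) (c : LTSeries (PrimeSpectrum (R ⧸ J))) :
    LTSeries (PrimeSpectrum R) where
  length := c.length
  toFun := fun i => ⟨((c i).asIdeal).comap (Ideal.Quotient.mk J), Ideal.IsPrime.comap _⟩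
  step := fun i => by
    have h1 : c.toFun i.castSucc < c.toFun i.succ := c.step i
    refine lt_of_le_of_ne (Ideal.comap_mono h1.le) (fun e => h1.ne ?_)
    have e2 := e
    exact PrimeSpectrum.ext
      (Ideal.comap_injective_of_surjective _ Ideal.Quotient.mk_surjective e2)

lemma auxComapSeries_head (J : Ideal R) (c : LTSeries (PrimeSpectrum (R ⧸ J))) :
    J ≤ (auxComapSeries J c).head.asIdeal := by
  intro r hr
  show r ∈ Ideal.comap (Ideal.Quotient.mk J) (c.toFun 0).asIdeal
  rw [Ideal.mem_comap, Ideal.Quotient.eq_zero_iff_mem.mpr hr]; exact zero_mem _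

lemma auxComapSeries_length (J : Ideal R) (c : LTSeries (PrimeSpectrum (R ⧸ J))) :
    (auxComapSeries J c).length = c.length := rfl

lemma auxKrullDimLe (I J : Ideal R) (h : ∀ p : Ideal R, p.IsPrime → J ≤ p → I ≤ p) :
    ringKrullDim (R ⧸ J) ≤ ringKrullDim (R ⧸ I) := by
  show krullDim _ ≤ _
  rw [krullDim]
  refine iSup_le fun c => ?_
  have := auxLenLe I (auxComapSeries J c)
    (h _ (auxComapSeries J c).head.2 (auxComapSeries_head J c))
  rwa [auxComapSeries_length] at this

lemma auxKrullDimMulLe (I J : Ideal R) :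
    ringKrullDim (R ⧸ (I * J)) ≤ max (ringKrullDim (R ⧸ I)) (ringKrullDim (R ⧸ J)) := by
  show krullDim _ ≤ _
  rw [krullDim]
  refine iSup_le fun c => ?_
  have hh := auxComapSeries_head (I * J) c
  have hlen := auxComapSeries_length (I * J) c
  rcases (Ideal.IsPrime.mul_le (auxComapSeries (I*J) c).head.2).mp hh with h | h
  · have := auxLenLe I _ h; rw [hlen] at this; exact le_max_of_le_left this
  · have := auxLenLe J _ h; rw [hlen] at this; exact le_max_of_le_right this

lemma auxCastLe {a : WithBot ℕ∞} {d : ℕ} (hd : 1 ≤ d) (h : a < (d : WithBot ℕ∞)) :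
    a ≤ ((d - 1 : ℕ) : WithBot ℕ∞) := by
  induction a using WithBot.recBotCoe with
  | bot => exact bot_le
  | coe a =>
    induction a using ENat.recTopCoe with
    | top =>
      exfalso
      have : (d : WithBot ℕ∞) ≤ ((⊤ : ℕ∞) : WithBot ℕ∞) := by
        rw [show ((d : ℕ) : WithBot ℕ∞) = ((d : ℕ∞) : WithBot ℕ∞) by rfl]
        exact WithBot.coe_le_coe.mpr le_top
      exact absurd (lt_of_lt_of_le h this) (lt_irrefl _)
    | coe a =>
      have h' : ((a : ℕ) : ℕ∞) < ((d : ℕ) : ℕ∞) := by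
        rw [show ((d : ℕ) : WithBot ℕ∞) = (((d : ℕ) : ℕ∞) : WithBot ℕ∞) by rfl] at h
        exact_mod_cast h
      have : a < d := by exact_mod_cast h'
      rw [show ((d - 1 : ℕ) : WithBot ℕ∞) = (((d - 1 : ℕ) : ℕ∞) : WithBot ℕ∞) by rfl]
      exact WithBot.coe_le_coe.mpr (by exact_mod_cast Nat.le_sub_one_of_lt this)

lemma auxPowMem (M : Type) [AddCommGroup M] [Module R M] [Module.Finite R M] (x a : R)
    (ha : a ∈ Module.annihilator R (M ⧸ (Ideal.span {x} • ⊤ : Submodule R M))) :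
    ∃ n : ℕ, a ^ n ∈ Ideal.span {x} ⊔ Module.annihilator R M := by
  have hrange : LinearMap.range (a • (LinearMap.id : M →ₗ[R] M)) ≤ Ideal.span {x} • ⊤ := by
    rintro m ⟨m', rfl⟩
    have := Module.mem_annihilator.mp ha (Submodule.Quotient.mk m')
    rw [← Submodule.Quotient.mk_smul, Submodule.Quotient.mk_eq_zero] at this
    simpa using this
  obtain ⟨p, hmonic, -, hcoeff, heval⟩ :=
    LinearMap.exists_monic_and_natDegree_eq_and_coeff_mem_pow_and_aeval_eq_zero R
      (a • LinearMap.id) (Ideal.span {x}) hrange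
  refine ⟨p.natDegree, ?_⟩
  -- `p.eval a ∈ Ann M`
  have heval' : p.eval a ∈ Module.annihilator R M := by
    rw [Module.mem_annihilator]
    intro m
    have := congrArg (fun f : Module.End R M => f m) heval
    simpa [Polynomial.aeval_endomorphism, Polynomial.eval_eq_sum, Polynomial.sum,
      Finset.sum_apply, smul_pow, LinearMap.smul_apply, mul_smul, Finset.sum_smul,
      Module.End.id_pow] using this
  set n := p.natDegree with hn
  set q : Polynomial R := p - Polynomial.X ^ n with hq
  have hqcoeff : ∀ k, q.coeff k ∈ Ideal.span {x} := by
    intro k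
    rcases lt_trichotomy k n with hk | hk | hk
    · have : q.coeff k = p.coeff k := by
        simp [hq, Polynomial.coeff_X_pow, Nat.ne_of_lt hk, (Nat.ne_of_lt hk).symm]
      rw [this]
      exact Ideal.pow_le_self (Nat.sub_ne_zero_of_lt hk) (hcoeff k)
    · have : q.coeff k = 0 := by
        subst hk
        simp [hq, Polynomial.coeff_X_pow, Polynomial.Monic.coeff_natDegree hmonic, hn]
      rw [this]; exact zero_mem _
    · have : q.coeff k = 0 := by
        simp [hq, Polynomial.coeff_X_pow, Nat.ne_of_lt hk, (Nat.ne_of_lt hk).symm,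
          Polynomial.coeff_eq_zero_of_natDegree_lt hk]
      rw [this]; exact zero_mem _
  have hqeval : q.eval a ∈ Ideal.span {x} := by
    rw [Polynomial.eval_eq_sum_range]
    exact Ideal.sum_mem _ fun i _ => Ideal.mul_mem_right _ _ (hqcoeff i)
  have : a ^ n = p.eval a - q.eval a := by
    simp [hq]
  rw [this]
  exact Submodule.sub_mem _ (Submodule.mem_sup_right heval') (Submodule.mem_sup_left hqeval)

lemma auxAnnQuotLe (M : Type) [AddCommGroup M] [Module R M] [Module.Finite R M] (x : R)
    (p : Ideal R) (hp : p.IsPrime) (h : Ideal.span {x} ⊔ Module.annihilator R M ≤ p) :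
    Module.annihilator R (M ⧸ (Ideal.span {x} • ⊤ : Submodule R M)) ≤ p := by
  intro a ha
  obtain ⟨n, hn⟩ := auxPowMem M x a ha
  exact hp.mem_of_pow_mem n (h hn)

/-- Below every prime in the support there is an associated prime (Noetherian ring). -/
lemma auxExistsAssocLe [IsNoetherianRing R] (M : Type) [AddCommGroup M] [Module R M]
    (q : Ideal R) (hq : q.IsPrime) (u0 : M) (hu0 : ∀ r ∉ q, r • u0 ≠ 0) :
    ∃ p ∈ associatedPrimes R M, p ≤ q := by
  classical
  -- saturated annihilator
  let A : M → Ideal R := fun u =>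
    { carrier := {r | ∃ s ∉ q, (s * r) • u = 0}
      add_mem' := by
        rintro r₁ r₂ ⟨s₁, hs₁, e₁⟩ ⟨s₂, hs₂, e₂⟩
        refine ⟨s₁ * s₂, fun hmem => ((hq.mem_or_mem hmem).elim hs₁ hs₂), ?_⟩
        have h1 : (s₁ * s₂) * (r₁ + r₂) = s₂ * (s₁ * r₁) + s₁ * (s₂ * r₂) := by ring
        rw [h1, add_smul, mul_smul s₂ (s₁ * r₁) u, mul_smul s₁ (s₂ * r₂) u, e₁, e₂,
          smul_zero, smul_zero, add_zero]
      zero_mem' := ⟨1, fun hmem => hq.ne_top (Ideal.eq_top_of_isUnit_mem _ hmem isUnit_one),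
        by simp⟩
      smul_mem' := by
        rintro c r ⟨s, hs, e⟩
        refine ⟨s, hs, ?_⟩
        have h1 : s * (c • r) = c * (s * r) := by simp only [smul_eq_mul]; ring
        rw [h1, mul_smul c (s * r) u, e, smul_zero] }
  have hmemA : ∀ (u : M) (r : R), r ∈ A u ↔ ∃ s ∉ q, (s * r) • u = 0 := fun u r => Iff.rfl
  have hAle : ∀ u : M, (∀ r ∉ q, r • u ≠ 0) → A u ≤ q := by
    intro u hu r hr
    by_contra hrq
    obtain ⟨s, hs, e⟩ := (hmemA u r).mp hr
    have hsr : s * r ∉ q := fun hmem => (hq.mem_or_mem hmem).elim hs hrq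
    exact hu _ hsr e
  -- maximal saturated annihilator
  obtain ⟨P, ⟨⟨u, hPu, hule⟩, hPq⟩, hmax⟩ :=
    set_has_maximal_iff_noetherian.mpr (inferInstance : IsNoetherian R R)
      {P : Ideal R | (∃ u : M, P = A u ∧ (∀ r ∉ q, r • u ≠ 0)) ∧ P ≤ q}
      ⟨A u0, ⟨u0, rfl, hu0⟩, hAle u0 hu0⟩
  subst hPu
  -- `A u` is prime
  have hprime : (A u).IsPrime := by
    refine ⟨fun htop => hq.ne_top (top_le_iff.mp (htop ▸ hPq)), ?_⟩
    intro a b hab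
    rw [or_iff_not_imp_right]
    intro hb
    have hbu : ∀ r ∉ q, r • (b • u) ≠ 0 := by
      intro r hr e
      exact hb ((hmemA u b).mpr ⟨r, hr, by rwa [← smul_smul] ⟩)
    have hSb : A (b • u) ∈ {P : Ideal R | (∃ v : M, P = A v ∧ (∀ r ∉ q, r • v ≠ 0)) ∧ P ≤ q} :=
      ⟨⟨b • u, rfl, hbu⟩, hAle _ hbu⟩
    have hle : A u ≤ A (b • u) := by
      intro r hr
      obtain ⟨s, hs, e⟩ := (hmemA u r).mp hr
      exact (hmemA _ r).mpr ⟨s, hs, by rw [smul_comm, e, smul_zero]⟩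
    have heq : A u = A (b • u) := by
      rcases hle.lt_or_eq with h | h
      · exact absurd h (hmax _ hSb)
      · exact h
    rw [heq]
    obtain ⟨s, hs, e⟩ := (hmemA u (a * b)).mp hab
    refine (hmemA _ a).mpr ⟨s, hs, ?_⟩
    rw [smul_smul, mul_assoc]
    exact e
  -- `A u` is an honest annihilator
  obtain ⟨t, ht⟩ : (A u).FG := IsNoetherian.noetherian (A u)
  have hch : ∀ r : {y // y ∈ t}, ∃ s, s ∉ q ∧ (s * (r : R)) • u = 0 := by
    intro r
    have hrP : (r : R) ∈ A u := by
      rw [← ht]; exact Ideal.subset_span r.2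
    obtain ⟨s, hs, e⟩ := (hmemA u r).mp hrP
    exact ⟨s, hs, e⟩
  choose sfun hs1 hs2 using hch
  set s : R := ∏ r ∈ t.attach, sfun r with hsdef
  have hsq : s ∉ q := by
    intro hmem
    obtain ⟨r, _, hr⟩ := (Ideal.IsPrime.prod_mem_iff (hp := hq)).mp hmem
    exact hs1 r hr
  have hPeq : A u = (Submodule.span R {s • u}).annihilator := by
    apply le_antisymm
    · rw [← ht, Ideal.span_le]
      intro r hr
      rw [SetLike.mem_coe, Submodule.mem_annihilator_span_singleton, smul_smul]
      have : r * s = (∏ x ∈ t.attach.erase ⟨r, hr⟩, sfun x) * (sfun ⟨r, hr⟩ * r) := by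
        rw [hsdef, ← Finset.mul_prod_erase t.attach sfun (Finset.mem_attach t ⟨r, hr⟩)]
        ring
      rw [this, mul_smul, hs2 ⟨r, hr⟩, smul_zero]
    · intro r hr
      rw [Submodule.mem_annihilator_span_singleton, smul_smul] at hr
      refine (hmemA u r).mpr ⟨s, hsq, ?_⟩
      rwa [mul_comm s r]
  exact ⟨A u, isAssociatedPrime_iff.mpr ⟨hprime, s • u, hPeq.trans (by
    ext r; simp [Submodule.mem_annihilator_span_singleton, Submodule.mem_colon_singleton])⟩, hPq⟩

lemma auxNatCastLeIff (a b : ℕ) :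
    ((a : ℕ) : WithBot ℕ∞) ≤ ((b : ℕ) : WithBot ℕ∞) ↔ a ≤ b := by
  rw [show ((a : ℕ) : WithBot ℕ∞) = (((a : ℕ) : ℕ∞) : WithBot ℕ∞) from rfl,
    show ((b : ℕ) : WithBot ℕ∞) = (((b : ℕ) : ℕ∞) : WithBot ℕ∞) from rfl,
    WithBot.coe_le_coe, Nat.cast_le]

lemma auxNatCastLtIff (a b : ℕ) :
    ((a : ℕ) : WithBot ℕ∞) < ((b : ℕ) : WithBot ℕ∞) ↔ a < b := by
  rw [show ((a : ℕ) : WithBot ℕ∞) = (((a : ℕ) : ℕ∞) : WithBot ℕ∞) from rfl,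
    show ((b : ℕ) : WithBot ℕ∞) = (((b : ℕ) : ℕ∞) : WithBot ℕ∞) from rfl,
    WithBot.coe_lt_coe, Nat.cast_lt]

end AuxStmt12

/-- If `x` is a parameter element of `M` (with `d ≥ 2`) avoiding all
`p ∈ Ass U_M(0) \ {m}`, then `U_M(0) ∩ xM = x·U_M(0)`, there is a short exact sequence
`0 → U_M(0)/xU_M(0) → M/xM → M̄/xM̄ → 0` with `M̄ = M/U_M(0)`, and the image of
`U_M(0)/xU_M(0)` in `M/xM` is contained in `U_{M/xM}(0)`. -/
theorem stmt12 {R : Type} [CommRing R] [IsLocalRing R] [IsNoetherianRing R]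
    (M : Type) [AddCommGroup M] [Module R M] [Module.Finite R M]
    (d : ℕ) (hd2 : 2 ≤ d) (hdim : moduleDim R M = (d : WithBot ℕ∞))
    (U : Submodule R M) (hU : IsUnmixedComponent d U)
    (x : R) (hx : IsParamElt d M x)
    (hxp : ∀ p ∈ associatedPrimes R ↥U, p ≠ maximalIdeal R → x ∉ p) :
    U ⊓ (Ideal.span {x} • ⊤ : Submodule R M) = Ideal.span {x} • U ∧
    ∃ (f : (↥U ⧸ (Ideal.span {x} • ⊤ : Submodule R ↥U)) →ₗ[R]
          (M ⧸ (Ideal.span {x} • ⊤ : Submodule R M)))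
      (g : (M ⧸ (Ideal.span {x} • ⊤ : Submodule R M)) →ₗ[R]
          ((M ⧸ U) ⧸ (Ideal.span {x} • ⊤ : Submodule R (M ⧸ U)))),
      Function.Injective f ∧ Function.Surjective g ∧
      LinearMap.range f = LinearMap.ker g ∧
      ∀ U' : Submodule R (M ⧸ (Ideal.span {x} • ⊤ : Submodule R M)),
        IsUnmixedComponent (d - 1) U' → LinearMap.range f ≤ U' := by
  classical
  haveI : IsNoetherian R M := isNoetherian_of_isNoetherianRing_of_finite R M
  haveI hUFin : Module.Finite R ↥U := Module.Finite.iff_fg.mpr (IsNoetherian.noetherian U)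
  set AnnU : Ideal R := Module.annihilator R ↥U with hAnnU
  set J : Ideal R := Ideal.span {x} ⊔ Module.annihilator R M with hJ
  have hquotJ : ringKrullDim (R ⧸ J) ≤ ((d - 1 : ℕ) : WithBot ℕ∞) := by
    have h1 : ringKrullDim (R ⧸ J) ≤ ringKrullDim
        (R ⧸ Module.annihilator R (M ⧸ (Ideal.span {x} • ⊤ : Submodule R M))) :=
      auxKrullDimLe _ _ (fun p hp hle => auxAnnQuotLe M x p hp hle)
    exact h1.trans (le_of_eq hx.2)
  set N : Submodule R M := U.comap (LinearMap.lsmul R M x) with hNdef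
  have haN : AnnU * J ≤ Module.annihilator R ↥N := by
    rw [Ideal.mul_le]
    intro a ha j hj
    rw [Module.mem_annihilator]
    rintro ⟨n, hn⟩
    have hxn : x • n ∈ U := hn
    have hkill : ∀ u, u ∈ U → a • u = 0 := fun u hu =>
      congrArg Subtype.val (Module.mem_annihilator.mp ha ⟨u, hu⟩)
    apply Subtype.ext
    show (a * j) • n = 0
    rcases Submodule.mem_sup.mp hj with ⟨c, hc, j₀, hj₀, rfl⟩
    obtain ⟨r, rfl⟩ := Ideal.mem_span_singleton'.mp hc
    have h1 : j₀ • n = 0 := Module.mem_annihilator.mp hj₀ n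
    have h2 : a • (x • n) = 0 := hkill _ hxn
    have hsc : a * (r * x + j₀) = r * (a * x) + a * j₀ := by ring
    rw [hsc, add_smul, mul_smul r (a * x) n, mul_smul a x n, h2, smul_zero,
      mul_smul a j₀ n, h1, smul_zero, add_zero]
  have hdimN : moduleDim R ↥N < (d : WithBot ℕ∞) := by
    have h1 : ringKrullDim (R ⧸ Module.annihilator R ↥N) ≤ ringKrullDim (R ⧸ (AnnU * J)) :=
      auxKrullDimLe _ _ (fun p hp hle => le_trans haN hle)
    have h2 := auxKrullDimMulLe AnnU J
    have h3 : ringKrullDim (R ⧸ AnnU) < (d : WithBot ℕ∞) := hU.1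
    have h4 : ringKrullDim (R ⧸ J) < (d : WithBot ℕ∞) :=
      lt_of_le_of_lt hquotJ ((auxNatCastLtIff (d - 1) d).mpr (by omega))
    exact lt_of_le_of_lt (h1.trans h2) (max_lt h3 h4)
  have hNU : N ≤ U := hU.2 N hdimN
  have part1 : U ⊓ (Ideal.span {x} • ⊤ : Submodule R M) = Ideal.span {x} • U := by
    apply le_antisymm
    · intro u hu
      obtain ⟨huU, hux⟩ := Submodule.mem_inf.mp hu
      rw [Submodule.ideal_span_singleton_smul] at hux ⊢
      obtain ⟨m, _, rfl⟩ := Set.mem_smul_set.mp hux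
      have hmN : m ∈ N := by
        rw [hNdef, Submodule.mem_comap]
        simpa using huU
      exact Submodule.smul_mem_pointwise_smul m x U (hNU hmN)
    · exact le_inf (Submodule.smul_le.mpr fun r _ u hu => U.smul_mem r hu)
        (Submodule.smul_mono le_rfl le_top)
  set xU : Submodule R ↥U := Ideal.span {x} • ⊤ with hxUdef
  set xM : Submodule R M := Ideal.span {x} • ⊤ with hxMdef
  set xMU : Submodule R (M ⧸ U) := Ideal.span {x} • ⊤ with hxMUdef
  have hfle : xU ≤ xM.comap U.subtype :=
    Submodule.smul_le.mpr fun r hr u _ => Submodule.mem_comap.mpr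
      (by rw [map_smul]; exact Submodule.smul_mem_smul hr Submodule.mem_top)
  set f : (↥U ⧸ xU) →ₗ[R] (M ⧸ xM) := Submodule.mapQ xU xM U.subtype hfle with hfdef
  have hgle : xM ≤ xMU.comap U.mkQ :=
    Submodule.smul_le.mpr fun r hr m _ => Submodule.mem_comap.mpr
      (by rw [map_smul]; exact Submodule.smul_mem_smul hr Submodule.mem_top)
  set g : (M ⧸ xM) →ₗ[R] ((M ⧸ U) ⧸ xMU) := Submodule.mapQ xM xMU U.mkQ hgle with hgdef
  have hfmk : ∀ u : ↥U, f (xU.mkQ u) = xM.mkQ (u : M) := fun u => by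
    rw [hfdef, Submodule.mkQ_apply, Submodule.mapQ_apply]; rfl
  have hgmk : ∀ m : M, g (xM.mkQ m) = xMU.mkQ (U.mkQ m) := fun m => by
    rw [hgdef, Submodule.mkQ_apply, Submodule.mapQ_apply]; rfl
  have hrange : LinearMap.range f = U.map xM.mkQ := by
    apply le_antisymm
    · rintro y ⟨z, rfl⟩
      obtain ⟨u, rfl⟩ := xU.mkQ_surjective z
      rw [hfmk]
      exact Submodule.mem_map_of_mem u.2
    · rintro y ⟨u, hu, rfl⟩
      exact ⟨xU.mkQ ⟨u, hu⟩, hfmk _⟩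
  have hfinj : Function.Injective f := by
    rw [← LinearMap.ker_eq_bot, eq_bot_iff]
    intro z hz
    obtain ⟨u, rfl⟩ := xU.mkQ_surjective z
    rw [LinearMap.mem_ker, hfmk, Submodule.mkQ_apply,
      Submodule.Quotient.mk_eq_zero] at hz
    have h1 : (u : M) ∈ Ideal.span {x} • U := by
      rw [← part1]; exact Submodule.mem_inf.mpr ⟨u.2, hz⟩
    rw [Submodule.ideal_span_singleton_smul] at h1
    obtain ⟨m, hm, hmu⟩ := Set.mem_smul_set.mp h1
    rw [Submodule.mem_bot, Submodule.mkQ_apply, Submodule.Quotient.mk_eq_zero, hxUdef,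
      Submodule.ideal_span_singleton_smul]
    exact Set.mem_smul_set.mpr ⟨⟨m, hm⟩, Submodule.mem_top, Subtype.ext hmu⟩
  have hgsurj : Function.Surjective g := by
    intro z
    obtain ⟨w, rfl⟩ := xMU.mkQ_surjective z
    obtain ⟨m, rfl⟩ := U.mkQ_surjective w
    exact ⟨xM.mkQ m, hgmk m⟩
  have hkerg : LinearMap.ker g = U.map xM.mkQ := by
    apply le_antisymm
    · intro z hz
      obtain ⟨m, rfl⟩ := xM.mkQ_surjective z
      rw [LinearMap.mem_ker, hgmk, Submodule.mkQ_apply,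
        Submodule.Quotient.mk_eq_zero] at hz
      have hxMU_eq : xMU = xM.map U.mkQ := by
        rw [hxMUdef, hxMdef, Submodule.map_smul'', Submodule.map_top, Submodule.range_mkQ]
      rw [hxMU_eq] at hz
      obtain ⟨m', hm', hme⟩ := hz
      have hsub : m - m' ∈ U := by
        have h6 : m' - m ∈ U := by
          rw [← Submodule.Quotient.eq]
          simpa using hme
        simpa using U.neg_mem h6
      have h5 : xM.mkQ m = xM.mkQ (m - m') := by
        rw [map_sub]
        have h7 : xM.mkQ m' = 0 := by
          rw [Submodule.mkQ_apply, Submodule.Quotient.mk_eq_zero]; exact hm'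
        rw [h7, sub_zero]
      rw [h5]
      exact Submodule.mem_map_of_mem hsub
    · rintro z ⟨u, hu, rfl⟩
      rw [LinearMap.mem_ker, hgmk]
      have h8 : U.mkQ u = 0 := by
        rw [Submodule.mkQ_apply, Submodule.Quotient.mk_eq_zero]; exact hu
      rw [h8, map_zero]
  set K : Ideal R := AnnU ⊔ Ideal.span {x} with hKdef
  have hannrange : K ≤ Module.annihilator R ↥(U.map xM.mkQ) := by
    apply sup_le
    · intro a ha
      rw [Module.mem_annihilator]
      rintro ⟨y, hy⟩
      obtain ⟨u, hu, rfl⟩ := hy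
      apply Subtype.ext
      show a • xM.mkQ u = 0
      rw [← map_smul]
      have h0 : a • u = 0 := congrArg Subtype.val (Module.mem_annihilator.mp ha ⟨u, hu⟩)
      rw [h0, map_zero]
    · rw [Ideal.span_le]
      intro r hr
      rw [Set.mem_singleton_iff] at hr
      subst hr
      rw [SetLike.mem_coe, Module.mem_annihilator]
      rintro ⟨y, hy⟩
      obtain ⟨u, hu, rfl⟩ := hy
      apply Subtype.ext
      show r • xM.mkQ u = 0
      rw [← map_smul, Submodule.mkQ_apply, Submodule.Quotient.mk_eq_zero, hxMdef]
      exact Submodule.smul_mem_smul (Ideal.subset_span rfl) Submodule.mem_top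
  have hranK : ringKrullDim (R ⧸ Module.annihilator R ↥(U.map xM.mkQ)) ≤
      ringKrullDim (R ⧸ K) :=
    auxKrullDimLe K _ (fun p hp hle => hannrange.trans hle)
  have hKd2 : ringKrullDim (R ⧸ K) ≤ ((d - 2 : ℕ) : WithBot ℕ∞) := by
    show Order.krullDim _ ≤ _
    rw [Order.krullDim]
    refine iSup_le fun c => ?_
    have hhead : K ≤ (auxComapSeries K c).head.asIdeal := auxComapSeries_head K c
    have hlen : (auxComapSeries K c).length = c.length := rfl
    by_cases hm0 : (auxComapSeries K c).head.asIdeal = maximalIdeal R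
    · have h0 : c.length = 0 := by
        by_contra hne
        have hpos : 0 < (auxComapSeries K c).length := by
          rw [hlen]; exact Nat.pos_of_ne_zero hne
        have hstep := (auxComapSeries K c).step ⟨0, hpos⟩
        have hcast : (⟨0, hpos⟩ : Fin (auxComapSeries K c).length).castSucc = 0 := rfl
        rw [hcast] at hstep
        have hlt : maximalIdeal R <
            ((auxComapSeries K c) (⟨0, hpos⟩ : Fin _).succ).asIdeal := by
          rw [← hm0]; exact hstep
        exact ((auxComapSeries K c) (⟨0, hpos⟩ : Fin _).succ).2.ne_top
          ((maximalIdeal.isMaximal R).1.2 _ hlt)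
      rw [h0]
      exact (auxNatCastLeIff 0 (d - 2)).mpr (Nat.zero_le _)
    · have hAnnle : AnnU ≤ (auxComapSeries K c).head.asIdeal := le_trans le_sup_left hhead
      have hsupp : (auxComapSeries K c).head ∈ Module.support R ↥U :=
        Module.mem_support_iff_of_finite.mpr hAnnle
      obtain ⟨u0, hu0⟩ := Module.mem_support_iff'.mp hsupp
      obtain ⟨p, hpAss, hpq⟩ :=
        auxExistsAssocLe ↥U (auxComapSeries K c).head.asIdeal (auxComapSeries K c).head.2 u0 hu0
      have hpm : p ≠ maximalIdeal R := fun e =>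
        hm0 (le_antisymm (IsLocalRing.le_maximalIdeal (auxComapSeries K c).head.2.ne_top)
          (e ▸ hpq))
      have hxhead : x ∈ (auxComapSeries K c).head.asIdeal :=
        hhead (Submodule.mem_sup_right (Ideal.subset_span rfl))
      have hplt : (⟨p, hpAss.isPrime⟩ : PrimeSpectrum R) < (auxComapSeries K c).head := by
        show p < (auxComapSeries K c).head.asIdeal
        exact lt_of_le_of_ne hpq (fun e => hxp p hpAss hpm (e ▸ hxhead))
      set c'' := (auxComapSeries K c).cons ⟨p, hpAss.isPrime⟩ hplt with hc''
      have hheadc'' : AnnU ≤ c''.head.asIdeal := by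
        rw [hc'', RelSeries.head_cons]
        have h9 := hpAss.annihilator_le
        rwa [Submodule.annihilator_top] at h9
      have hchain := auxLenLe AnnU c'' hheadc''
      have hlen2 : c''.length = c.length + 1 := by
        rw [hc'', RelSeries.cons_length, hlen]
      rw [hlen2] at hchain
      have hUd1 : ringKrullDim (R ⧸ AnnU) ≤ ((d - 1 : ℕ) : WithBot ℕ∞) := auxCastLe (by omega) hU.1
      have hle1 : ((c.length + 1 : ℕ) : WithBot ℕ∞) ≤ ((d - 1 : ℕ) : WithBot ℕ∞) :=
        hchain.trans hUd1
      have hle2 : c.length + 1 ≤ d - 1 := (auxNatCastLeIff _ _).mp hle1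
      exact (auxNatCastLeIff _ _).mpr (by omega)
  have hdimrange : moduleDim R ↥(U.map xM.mkQ) < ((d - 1 : ℕ) : WithBot ℕ∞) :=
    lt_of_le_of_lt (hranK.trans hKd2) ((auxNatCastLtIff (d - 2) (d - 1)).mpr (by omega))
  refine ⟨part1, f, g, hfinj, hgsurj, hrange.trans hkerg.symm, ?_⟩
  intro U' hU'
  rw [hrange]
  exact hU'.2 _ hdimrange
end
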